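/- (Zero-curvature formulation of the Ablowitz–Ladik system.) Let q, p : ℤ × ℝ → ℂ be differentiable in t and satisfy the Ablowitz–Ladik system i ∂_t q_n + q_{n+1} − 2q_n + q_{n−1} − p_n q_n (q_{n+1} + q_{n−1}) = 0 and i ∂_t p_n − p_{n+1} + 2p_n − p_{n−1} + p_n q_n (p_{n+1} + p_{n−1}) = 0 for all n ∈ ℤ, t ∈ ℝ. Let f : ℤ × ℝ → ℂ be differentiable in t, nowhere zero, with f(n,t)² = 1 − q(n,t)p(n,t) for all n, t. Then for every z ∈ ℂ with z ≠ 0, every n ∈ ℤ and every t ∈ ℝ, the 2×2 matrices W(n,t,z) = f(n,t)^{−1}(𝒵 + 𝒰(n,t)) and T(n,t,z) = i ω(z) σ₃ + 𝒱(n,t,z) satisfy the zero-curvature equation ∂_t W(n,t,z) = T(n+1,t,z) W(n,t,z) − W(n,t,z) T(n,t,z). -/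

import Mathlib

noncomputable section

open Matrix

/-- `𝒵 = diag(z, z⁻¹)`. -/
def Zcal (z : ℂ) : Matrix (Fin 2) (Fin 2) ℂ := !![z, 0; 0, z⁻¹]

/-- `σ₃ = diag(1, −1)`. -/
def sigma3 : Matrix (Fin 2) (Fin 2) ℂ := !![1, 0; 0, -1]

/-- `ω(z) = (1/2)(z − z⁻¹)²`. -/
def omega (z : ℂ) : ℂ := (1 / 2 : ℂ) * (z - z⁻¹) ^ 2

/-- `𝒰(n,t) = [[0, q(n,t)],[p(n,t), 0]]`. -/
def Ucal (q p : ℤ → ℝ → ℂ) (n : ℤ) (t : ℝ) : Matrix (Fin 2) (Fin 2) ℂ :=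
  !![0, q n t; p n t, 0]

/-- `𝒱(n,t,z) = i (𝒰(n−1,t)𝒵 − 𝒰(n,t)𝒵⁻¹ − (1/2)(𝒰(n,t)𝒰(n−1,t) + 𝒰(n−1,t)𝒰(n,t))) σ₃`. -/
def Vcal (q p : ℤ → ℝ → ℂ) (n : ℤ) (t : ℝ) (z : ℂ) : Matrix (Fin 2) (Fin 2) ℂ :=
  Complex.I • ((Ucal q p (n - 1) t * Zcal z - Ucal q p n t * (Zcal z)⁻¹
    - (1 / 2 : ℂ) • (Ucal q p n t * Ucal q p (n - 1) t
      + Ucal q p (n - 1) t * Ucal q p n t)) * sigma3)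

/-- `W(n,t,z) = f(n,t)⁻¹ (𝒵 + 𝒰(n,t))`. -/
def Wmat (q p f : ℤ → ℝ → ℂ) (n : ℤ) (t : ℝ) (z : ℂ) : Matrix (Fin 2) (Fin 2) ℂ :=
  (f n t)⁻¹ • (Zcal z + Ucal q p n t)

/-- `T(n,t,z) = i ω(z) σ₃ + 𝒱(n,t,z)`. -/
def Tmat (q p : ℤ → ℝ → ℂ) (n : ℤ) (t : ℝ) (z : ℂ) : Matrix (Fin 2) (Fin 2) ℂ :=
  (Complex.I * omega z) • sigma3 + Vcal q p n t z

set_option maxHeartbeats 1000000 in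
/-- Zero-curvature formulation of the Ablowitz–Ladik system: if `(q,p)` solves the
AL system and `f² = 1 − qp` with `f` nowhere zero, then
`∂_t W(n,t,z) = T(n+1,t,z) W(n,t,z) − W(n,t,z) T(n,t,z)` (entrywise) for every
`z ≠ 0`, `n ∈ ℤ`, `t ∈ ℝ`. -/
theorem stmt5 (q p f : ℤ → ℝ → ℂ)
    (hq : ∀ n t, DifferentiableAt ℝ (q n) t)
    (hp : ∀ n t, DifferentiableAt ℝ (p n) t)
    (hf : ∀ n t, DifferentiableAt ℝ (f n) t)
    (hfne : ∀ n t, f n t ≠ 0)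
    (hfsq : ∀ n t, (f n t) ^ 2 = 1 - q n t * p n t)
    (hALq : ∀ (n : ℤ) (t : ℝ),
      Complex.I * deriv (q n) t + q (n + 1) t - 2 * q n t + q (n - 1) t
        - p n t * q n t * (q (n + 1) t + q (n - 1) t) = 0)
    (hALp : ∀ (n : ℤ) (t : ℝ),
      Complex.I * deriv (p n) t - p (n + 1) t + 2 * p n t - p (n - 1) t
        + p n t * q n t * (p (n + 1) t + p (n - 1) t) = 0) :
    ∀ (z : ℂ), z ≠ 0 → ∀ (n : ℤ) (t : ℝ) (i j : Fin 2),
      deriv (fun s => Wmat q p f n s z i j) t =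
        (Tmat q p (n + 1) t z * Wmat q p f n t z
          - Wmat q p f n t z * Tmat q p n t z) i j := by
  intro z hz n t i j
  have hI : Complex.I ^ 2 = -1 := Complex.I_sq
  have hdq : ∀ m : ℤ, deriv (q m) t = Complex.I * (q (m + 1) t - 2 * q m t + q (m - 1) t
      - p m t * q m t * (q (m + 1) t + q (m - 1) t)) := by
    intro m
    have h := hALq m t
    linear_combination (-Complex.I) * h + (deriv (q m) t) * hI
  have hdp : ∀ m : ℤ, deriv (p m) t = Complex.I * (-(p (m + 1) t) + 2 * p m t - p (m - 1) t
      + p m t * q m t * (p (m + 1) t + p (m - 1) t)) := by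
    intro m
    have h := hALp m t
    linear_combination (-Complex.I) * h + (deriv (p m) t) * hI
  -- derivative of f
  have hdf : deriv (f n) t = -(Complex.I) * f n t
      * (p n t * q (n + 1) t + p n t * q (n - 1) t
        - q n t * p (n + 1) t - q n t * p (n - 1) t) / 2 := by
    have h1 : deriv (fun s => f n s ^ 2) t = deriv (fun s => 1 - q n s * p n s) t := by
      congr 1
      funext s
      rw [hfsq n s]
    have h2 : deriv (fun s => f n s ^ 2) t = 2 * f n t * deriv (f n) t := by
      have e2 : (fun s : ℝ => f n s ^ 2) = fun s => f n s * f n s := by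
        funext s
        ring
      rw [e2, deriv_fun_mul (hf n t) (hf n t)]
      ring
    have h3 : deriv (fun s => 1 - q n s * p n s) t
        = -(deriv (q n) t * p n t + q n t * deriv (p n) t) := by
      rw [deriv_const_sub, deriv_fun_mul (hq n t) (hp n t)]
    have h4 : 2 * f n t * deriv (f n) t
        = -(deriv (q n) t * p n t + q n t * deriv (p n) t) := by
      rw [← h2, h1, h3]
    have h5 : f n t * (2 * deriv (f n) t) = f n t * (-(Complex.I) * f n t
        * (p n t * q (n + 1) t + p n t * q (n - 1) t
          - q n t * p (n + 1) t - q n t * p (n - 1) t)) := by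
      linear_combination h4 - p n t * hdq n - q n t * hdp n
        + Complex.I * (p n t * q (n + 1) t + p n t * q (n - 1) t
          - q n t * p (n + 1) t - q n t * p (n - 1) t) * hfsq n t
    have h6 := mul_left_cancel₀ (hfne n t) h5
    linear_combination h6 / 2
  have hZ : (Zcal z)⁻¹ = !![z⁻¹, 0; 0, z] := by
    apply Matrix.inv_eq_right_inv
    simp [Zcal, Matrix.mul_fin_two, mul_inv_cancel₀ hz, inv_mul_cancel₀ hz, Matrix.one_fin_two]
  have hzw : z * z⁻¹ = 1 := mul_inv_cancel₀ hz
  have hfg : f n t * (f n t)⁻¹ = 1 := mul_inv_cancel₀ (hfne n t)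
  fin_cases i <;> fin_cases j
  · -- (0,0)
    have L : deriv (fun s => Wmat q p f n s z 0 0) t
        = (0 * f n t - z * deriv (f n) t) / f n t ^ 2 := by
      have e : (fun s => Wmat q p f n s z 0 0) = fun s => z / f n s := by
        funext s
        simp [Wmat, Zcal, Ucal, inv_mul_eq_div]
      rw [e]
      exact ((hasDerivAt_const t z).div ((hf n t).hasDerivAt) (hfne n t)).deriv
    simp only [Fin.zero_eta, Fin.isValue]
    rw [L]
    simp only [Tmat, Vcal, hZ]
    simp [Wmat, omega, Ucal, Zcal, sigma3, Matrix.mul_apply, Fin.sum_univ_two,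
      Matrix.sub_apply, Matrix.add_apply, Matrix.smul_apply, smul_eq_mul]
    rw [hdf]
    linear_combination (norm := ring_nf) (Complex.I * z * (p n t * q (n + 1) t + p n t * q (n - 1) t - q n t * p (n + 1) t - q n t * p (n - 1) t) * (f n t)⁻¹ / 2) * hfg
  · -- (0,1)
    have L : deriv (fun s => Wmat q p f n s z 0 1) t
        = (deriv (q n) t * f n t - q n t * deriv (f n) t) / f n t ^ 2 := by
      have e : (fun s => Wmat q p f n s z 0 1) = fun s => q n s / f n s := by
        funext s
        simp [Wmat, Zcal, Ucal, inv_mul_eq_div]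
      rw [e]
      exact (((hq n t).hasDerivAt).div ((hf n t).hasDerivAt) (hfne n t)).deriv
    simp only [Fin.zero_eta, Fin.mk_one, Fin.isValue]
    rw [L]
    simp only [Tmat, Vcal, hZ]
    simp [Wmat, omega, Ucal, Zcal, sigma3, Matrix.mul_apply, Fin.sum_univ_two,
      Matrix.sub_apply, Matrix.add_apply, Matrix.smul_apply, smul_eq_mul]
    rw [hdf, hdq n]
    linear_combination (norm := ring_nf)
      (Complex.I * (f n t)⁻¹ * (q (n + 1) t + q (n - 1) t - 2 * q n t - q n t * ((q n t * p (n - 1) t + p n t * q (n - 1) t + q (n + 1) t * p n t + p (n + 1) t * q n t) / 2))) * hfg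
      - (Complex.I * (f n t)⁻¹ * (q (n + 1) t + q (n - 1) t - 2 * q n t)) * hzw
  · -- (1,0)
    have L : deriv (fun s => Wmat q p f n s z 1 0) t
        = (deriv (p n) t * f n t - p n t * deriv (f n) t) / f n t ^ 2 := by
      have e : (fun s => Wmat q p f n s z 1 0) = fun s => p n s / f n s := by
        funext s
        simp [Wmat, Zcal, Ucal, inv_mul_eq_div]
      rw [e]
      exact (((hp n t).hasDerivAt).div ((hf n t).hasDerivAt) (hfne n t)).deriv
    simp only [Fin.zero_eta, Fin.mk_one, Fin.isValue]
    rw [L]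
    simp only [Tmat, Vcal, hZ]
    simp [Wmat, omega, Ucal, Zcal, sigma3, Matrix.mul_apply, Fin.sum_univ_two,
      Matrix.sub_apply, Matrix.add_apply, Matrix.smul_apply, smul_eq_mul]
    rw [hdf, hdp n]
    linear_combination (norm := ring_nf)
      (Complex.I * (f n t)⁻¹ * (2 * p n t - p (n + 1) t - p (n - 1) t + p n t * ((q n t * p (n - 1) t + p n t * q (n - 1) t + q (n + 1) t * p n t + p (n + 1) t * q n t) / 2))) * hfg
      - (Complex.I * (f n t)⁻¹ * (2 * p n t - p (n + 1) t - p (n - 1) t)) * hzw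
  · -- (1,1)
    have L : deriv (fun s => Wmat q p f n s z 1 1) t
        = (0 * f n t - z⁻¹ * deriv (f n) t) / f n t ^ 2 := by
      have e : (fun s => Wmat q p f n s z 1 1) = fun s => z⁻¹ / f n s := by
        funext s
        simp [Wmat, Zcal, Ucal, inv_mul_eq_div]
      rw [e]
      exact ((hasDerivAt_const t z⁻¹).div ((hf n t).hasDerivAt) (hfne n t)).deriv
    simp only [Fin.mk_one, Fin.isValue]
    rw [L]
    simp only [Tmat, Vcal, hZ]
    simp [Wmat, omega, Ucal, Zcal, sigma3, Matrix.mul_apply, Fin.sum_univ_two,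
      Matrix.sub_apply, Matrix.add_apply, Matrix.smul_apply, smul_eq_mul]
    rw [hdf]
    linear_combination (norm := ring_nf) (Complex.I * z⁻¹ * (p n t * q (n + 1) t + p n t * q (n - 1) t - q n t * p (n + 1) t - q n t * p (n - 1) t) * (f n t)⁻¹ / 2) * hfg

end
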